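/- arXiv:2502.18144 — 2 statements merged into one kernel-verified Lean document; each statement's English description precedes it below -/
import Mathlib

section
/- Let G be a connected simple graph on the vertex set [n] = {1,…,n}. Then the connected subgraph arrangement A_G over ℚ is projectively unique: every central arrangement in ℚ^n whose intersection lattice is isomorphic as a poset to that of A_G is linearly isomorphic to A_G. -/
open Submodule

/-! ## Basic definitions for hyperplane arrangements -/

/-- The linear form `∑_{i ∈ I} x_i` on `K^n`. -/
noncomputable def sumForm (n : ℕ) (K : Type*) [Field K] (I : Finset (Fin n)) :
    (Fin n → K) →ₗ[K] K :=
  ∑ i ∈ I, LinearMap.proj i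

/-- The hyperplane `H_I = ker (∑_{i ∈ I} x_i)` in `K^n`. -/
noncomputable def hypI (n : ℕ) (K : Type*) [Field K] (I : Finset (Fin n)) :
    Submodule K (Fin n → K) :=
  LinearMap.ker (sumForm n K I)

/-- The nonempty vertex subsets of `G` inducing connected subgraphs. -/
def connSets {n : ℕ} (G : SimpleGraph (Fin n)) : Set (Finset (Fin n)) :=
  {I | I.Nonempty ∧ (G.induce (I : Set (Fin n))).Connected}

/-- The connected subgraph arrangement `A_G(K)` in `K^n`. -/
noncomputable def connArr (K : Type*) [Field K] {n : ℕ} (G : SimpleGraph (Fin n)) :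
    Set (Submodule K (Fin n → K)) :=
  (hypI n K) '' (connSets G)

/-- The intersection lattice of a central arrangement: all intersections of
subfamilies of `A` (with the empty intersection being the ambient space `⊤`). -/
def lat {K V : Type*} [Field K] [AddCommGroup V] [Module K V]
    (A : Set (Submodule K V)) : Set (Submodule K V) :=
  {X | ∃ B ⊆ A, X = sInf B}

/-- A central arrangement: a finite set of hyperplanes (coatoms of the submodule
lattice) in `V`. -/
def IsCentralArr {K V : Type*} [Field K] [AddCommGroup V] [Module K V]
    (A : Set (Submodule K V)) : Prop :=
  A.Finite ∧ ∀ H ∈ A, IsCoatom H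

/-- Two arrangements in `V` are linearly isomorphic. -/
def LinIsom {K V : Type*} [Field K] [AddCommGroup V] [Module K V]
    (A B : Set (Submodule K V)) : Prop :=
  ∃ φ : V ≃ₗ[K] V, B = (Submodule.map (φ : V →ₗ[K] V)) '' A

/-- Two arrangements are `L`-equivalent: their intersection lattices are
isomorphic posets. -/
def LEquiv {K V W : Type*} [Field K] [AddCommGroup V] [Module K V]
    [AddCommGroup W] [Module K W]
    (A : Set (Submodule K V)) (B : Set (Submodule K W)) : Prop :=
  Nonempty (↥(lat A) ≃o ↥(lat B))

/-- An arrangement `A` in `V` is projectively unique if every central arrangement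
in `V` that is `L`-equivalent to `A` is linearly isomorphic to `A`. -/
def ProjUnique {K V : Type*} [Field K] [AddCommGroup V] [Module K V]
    (A : Set (Submodule K V)) : Prop :=
  ∀ B : Set (Submodule K V), IsCentralArr B → LEquiv B A → LinIsom B A

/-- `Gen_i(A,S)`. -/
def Gen {K V : Type*} [Field K] [AddCommGroup V] [Module K V]
    (A S : Set (Submodule K V)) : ℕ → Set (Submodule K V)
  | 0 => S
  | (i+1) => {H | H ∈ A ∧ ∃ J ⊆ lat (Gen A S i), H = sSup J}

/-- The subarrangement `⟨S⟩_A` of `A` generated by `S`. -/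
def genSpan {K V : Type*} [Field K] [AddCommGroup V] [Module K V]
    (A S : Set (Submodule K V)) : Set (Submodule K V) :=
  ⋃ i, Gen A S i

/-- An arrangement is irreducible if it is not (linearly isomorphic to)
a nontrivial product of two lower-dimensional arrangements. -/
def IsIrredArr {K V : Type*} [Field K] [AddCommGroup V] [Module K V]
    (A : Set (Submodule K V)) : Prop :=
  ¬ ∃ U W : Submodule K V, IsCompl U W ∧ U ≠ ⊥ ∧ W ≠ ⊥ ∧ ∀ H ∈ A, U ≤ H ∨ W ≤ H

/-! ## Freeness -/

/-- The linear form `f` as a degree one polynomial. -/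
noncomputable def toPoly {n : ℕ} {K : Type*} [Field K] (f : (Fin n → K) →ₗ[K] K) :
    MvPolynomial (Fin n) K :=
  ∑ i, MvPolynomial.C (f (Pi.single i 1)) * MvPolynomial.X i

/-- The module `D(A)` of logarithmic derivations of an arrangement in `K^n`:
all `θ` with `θ(α_H) ∈ (α_H)` for every defining form `α_H` of every `H ∈ A`. -/
noncomputable def logDer (K : Type*) [Field K] {n : ℕ}
    (A : Set (Submodule K (Fin n → K))) :
    Submodule (MvPolynomial (Fin n) K)
      (Derivation K (MvPolynomial (Fin n) K) (MvPolynomial (Fin n) K)) where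
  carrier := {θ | ∀ H ∈ A, ∀ f : (Fin n → K) →ₗ[K] K, LinearMap.ker f = H →
      θ (toPoly f) ∈ Ideal.span {toPoly f}}
  add_mem' := by
    intro a b ha hb H hH f hf
    simpa using add_mem (ha H hH f hf) (hb H hH f hf)
  zero_mem' := by
    intro H hH f hf
    simp
  smul_mem' := by
    intro c θ hθ H hH f hf
    simpa [smul_eq_mul] using Ideal.mul_mem_left _ c (hθ H hH f hf)

/-- An arrangement in `K^n` is free if its module of logarithmic derivations is
free over the polynomial ring. -/
def IsFreeArr (K : Type*) [Field K] {n : ℕ}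
    (A : Set (Submodule K (Fin n → K))) : Prop :=
  Module.Free (MvPolynomial (Fin n) K) ↥(logDer K A)

/-- Freeness with a prescribed tuple of exponents: there is a basis of `D(A)`
consisting of homogeneous derivations of the given degrees. -/
def IsFreeExp (K : Type*) [Field K] {n : ℕ} (A : Set (Submodule K (Fin n → K)))
    (e : Fin n → ℕ) : Prop :=
  ∃ b : Module.Basis (Fin n) (MvPolynomial (Fin n) K) ↥(logDer K A),
    ∀ i j, ((b i : Derivation K (MvPolynomial (Fin n) K) (MvPolynomial (Fin n) K))
      (MvPolynomial.X j)).IsHomogeneous (e i)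

/-- The restriction `A^X` of an arrangement to a flat `X`, as an arrangement in `X`. -/
def restrictArr {K V : Type*} [Field K] [AddCommGroup V] [Module K V]
    (A : Set (Submodule K V)) (X : Submodule K V) : Set (Submodule K ↥X) :=
  {Y | ∃ H ∈ A, ¬ X ≤ H ∧ Y = Submodule.comap X.subtype H}

/-- Freeness with prescribed exponents for an arrangement in an abstract space:
transport along a linear isomorphism with `K^d`. -/
def IsFreeExpOn {K W : Type*} [Field K] [AddCommGroup W] [Module K W]
    (A : Set (Submodule K W)) (d : ℕ) (e : Fin d → ℕ) : Prop :=
  ∃ φ : W ≃ₗ[K] (Fin d → K),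
    IsFreeExp K ((Submodule.map (φ : W →ₗ[K] (Fin d → K))) '' A) e

/-- Accuracy: `A` is free with (sorted) exponents `e₁ ≤ … ≤ e_n` and for each
`1 ≤ d ≤ n` some flat `X ∈ L(A)` of dimension `d` has free restriction `A^X`
with exponents `(e₁, …, e_d)`. -/
def IsAccurate (K : Type*) [Field K] {n : ℕ}
    (A : Set (Submodule K (Fin n → K))) : Prop :=
  ∃ e : Fin n → ℕ, Monotone e ∧ IsFreeExp K A e ∧
    ∀ d : ℕ, 1 ≤ d → ∀ (hdn : d ≤ n), ∃ X ∈ lat A, Module.finrank K ↥X = d ∧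
      IsFreeExpOn (restrictArr A X) d (fun i => e ⟨i.1, lt_of_lt_of_le i.2 hdn⟩)

/-! ## Graphs -/

/-- The path graph on vertices `0, 1, …, n-1` (consecutive vertices adjacent). -/
def pathGraph' (n : ℕ) : SimpleGraph (Fin n) :=
  SimpleGraph.fromRel (fun a b => a.1 + 1 = b.1)

/-- The almost-path graph `A_{n,k}` (vertices `1, …, n+1` of the paper are
`0, …, n` here): a path on `0, …, n-1` plus the vertex `n` joined to `k-1`. -/
def almostPathGraph (n k : ℕ) : SimpleGraph (Fin (n+1)) :=
  SimpleGraph.fromRel (fun a b => (a.1 + 1 = b.1 ∧ b.1 < n) ∨ (a.1 + 1 = k ∧ b.1 = n))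

/-- The path-with-triangle graph `Δ_{n,k}` (vertices `1, …, n+1` of the paper are
`0, …, n` here): a path on `0, …, n-1` plus the vertex `n` joined to `k-1` and `k`. -/
def pathTriangleGraph (n k : ℕ) : SimpleGraph (Fin (n+1)) :=
  SimpleGraph.fromRel (fun a b =>
    (a.1 + 1 = b.1 ∧ b.1 < n) ∨ ((a.1 + 1 = k ∨ a.1 = k) ∧ b.1 = n))

/-! ## Factored and inductively factored arrangements -/

/-- The localization `A_X`. -/
def locArr {K V : Type*} [Field K] [AddCommGroup V] [Module K V]
    (A : Set (Submodule K V)) (X : Submodule K V) : Set (Submodule K V) :=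
  {H | H ∈ A ∧ X ≤ H}

/-- `P` is a partition of the set `A` (into nonempty blocks). -/
def IsPartitionOf {α : Type*} (A : Set α) (P : Set (Set α)) : Prop :=
  (∀ B ∈ P, B.Nonempty) ∧ (∀ B ∈ P, B ⊆ A) ∧ ∀ a ∈ A, ∃! B, B ∈ P ∧ a ∈ B

/-- A partition of an arrangement is independent if any transversal choice of
hyperplanes, one from each block, is linearly independent (the codimension of the
intersection equals the number of blocks). -/
def IsIndepPartition {K V : Type*} [Field K] [AddCommGroup V] [Module K V]
    (P : Set (Set (Submodule K V))) : Prop :=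
  ∀ f : Set (Submodule K V) → Submodule K V, (∀ B ∈ P, f B ∈ B) →
    Module.finrank K V = P.ncard + Module.finrank K ↥(⨅ B ∈ P, f B)

/-- A nice partition (factorization) of an arrangement. -/
def IsNicePartition {K V : Type*} [Field K] [AddCommGroup V] [Module K V]
    (A : Set (Submodule K V)) (P : Set (Set (Submodule K V))) : Prop :=
  IsPartitionOf A P ∧ IsIndepPartition P ∧
    ∀ X ∈ lat A, X ≠ (⊤ : Submodule K V) →
      ∃ B ∈ P, ∃ H, B ∩ locArr A X = {H}

/-- An arrangement is factored (nice) if it admits a nice partition. -/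
def IsFactored {K V : Type*} [Field K] [AddCommGroup V] [Module K V]
    (A : Set (Submodule K V)) : Prop :=
  ∃ P, IsNicePartition A P

/-- Inductively factored arrangements (in coordinate spaces `K^d`, restrictions
being transported to a coordinate space by a linear isomorphism). -/
inductive IndFactored (K : Type) [Field K] :
    (d : ℕ) → Set (Submodule K (Fin d → K)) → Set (Set (Submodule K (Fin d → K))) → Prop
  | empty (d : ℕ) : IndFactored K d ∅ ∅
  | step (d : ℕ) (A : Set (Submodule K (Fin d → K)))
      (P : Set (Set (Submodule K (Fin d → K))))
      (B₁ : Set (Submodule K (Fin d → K))) (H₀ : Submodule K (Fin d → K))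
      (e : ℕ) (φ : ↥H₀ ≃ₗ[K] (Fin e → K))
      (hB₁ : B₁ ∈ P) (hH₀B : H₀ ∈ B₁) (hH₀A : H₀ ∈ A)
      (hbij : Set.BijOn (fun H => Submodule.comap H₀.subtype H) (A \ B₁)
        ((fun H => Submodule.comap H₀.subtype H) '' (A \ {H₀})))
      (hdel : IndFactored K d (A \ {H₀})
        {C | ∃ B ∈ P, C = B ∩ (A \ {H₀}) ∧ C.Nonempty})
      (hres : IndFactored K e
        ((fun Y => Submodule.map (φ : ↥H₀ →ₗ[K] (Fin e → K)) Y) ''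
          ((fun H => Submodule.comap H₀.subtype H) '' (A \ {H₀})))
        {C | ∃ B ∈ P, B ≠ B₁ ∧
          C = (fun Y => Submodule.map (φ : ↥H₀ →ₗ[K] (Fin e → K)) Y) ''
            ((fun H => Submodule.comap H₀.subtype H) '' B)}) :
      IndFactored K d A P

/-- Inductively free arrangements with their multisets of exponents. -/
inductive IndFree (K : Type) [Field K] :
    (d : ℕ) → Set (Submodule K (Fin d → K)) → Multiset ℕ → Prop
  | empty (d : ℕ) : IndFree K d ∅ (Multiset.replicate d 0)
  | step (d : ℕ) (A : Set (Submodule K (Fin d → K))) (H₀ : Submodule K (Fin d → K))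
      (m : ℕ) (φ : ↥H₀ ≃ₗ[K] (Fin m → K)) (E : Multiset ℕ) (e : ℕ)
      (hH₀ : H₀ ∈ A)
      (hdel : IndFree K d (A \ {H₀}) (e ::ₘ E))
      (hres : IndFree K m
        ((fun Y => Submodule.map (φ : ↥H₀ →ₗ[K] (Fin m → K)) Y) ''
          ((fun H => Submodule.comap H₀.subtype H) '' (A \ {H₀}))) E) :
      IndFree K d A ((e+1) ::ₘ E)

/-! ## Asphericity -/

/-- The complement of (the union of) a complex arrangement in `ℂ^n`. -/
def arrComp {n : ℕ} (A : Set (Submodule ℂ (Fin n → ℂ))) : Set (Fin n → ℂ) :=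
  {v | ∀ H ∈ A, v ∉ H}

/-- A space is aspherical if all its homotopy groups `π_m`, `m ≥ 2`, vanish. -/
def IsAspherical (X : Type*) [TopologicalSpace X] : Prop :=
  ∀ (x : X) (m : ℕ), 2 ≤ m → Subsingleton (HomotopyGroup (Fin m) X x)

/-- A complex arrangement is `K(π,1)` if its complement is aspherical. -/
def IsKPi1 {n : ℕ} (A : Set (Submodule ℂ (Fin n → ℂ))) : Prop :=
  IsAspherical ↥(arrComp A)

/-! ## Formality -/

/-- Formality: all linear dependencies among (any choice of) defining forms of the
hyperplanes are generated by the dependencies supported on rank-two flats. -/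
def IsFormal {K V : Type*} [Field K] [AddCommGroup V] [Module K V]
    (A : Set (Submodule K V)) : Prop :=
  ∀ α : Submodule K V → (V →ₗ[K] K),
    (∀ H ∈ A, LinearMap.ker (α H) = H) →
    ∀ c : Submodule K V →₀ K, ↑c.support ⊆ A →
      (∑ H ∈ c.support, c H • α H) = 0 →
      c ∈ Submodule.span K
        {r : Submodule K V →₀ K | ↑r.support ⊆ A ∧
          (∑ H ∈ r.support, r H • α H) = 0 ∧
          ∃ X ∈ lat A, Module.finrank K (V ⧸ X) = 2 ∧ ∀ H ∈ r.support, X ≤ H}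

/-- Combinatorial formality. -/
def IsCombFormal {K V : Type*} [Field K] [AddCommGroup V] [Module K V]
    (A : Set (Submodule K V)) : Prop :=
  IsFormal A ∧ ∀ (K' : Type) [Field K'] (m : ℕ) (B : Set (Submodule K' (Fin m → K'))),
    IsCentralArr B → Nonempty (↥(lat B) ≃o ↥(lat A)) → IsFormal B

/-! ## Line closure -/

/-- `C` is a line-closed subset of the arrangement `A`. -/
def IsLineClosed {K V : Type*} [Field K] [AddCommGroup V] [Module K V]
    (A C : Set (Submodule K V)) : Prop :=
  ∀ H ∈ C, ∀ H' ∈ C, {H'' | H'' ∈ A ∧ H ⊓ H' ≤ H''} ⊆ C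

/-- The line closure of `B` in `A`. -/
def lineClosure {K V : Type*} [Field K] [AddCommGroup V] [Module K V]
    (A B : Set (Submodule K V)) : Set (Submodule K V) :=
  ⋂₀ {C | B ⊆ C ∧ C ⊆ A ∧ IsLineClosed A C}

/-! ## MAT-freeness -/

/-- MAT-freeness of an arrangement in `K^n`. -/
def IsMATFree (K : Type*) [Field K] {n : ℕ}
    (A : Set (Submodule K (Fin n → K))) : Prop :=
  ∃ (m : ℕ) (π : Fin m → Set (Submodule K (Fin n → K))),
    (⋃ i, π i) = A ∧
    (∀ i, (π i).Nonempty) ∧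
    (∀ i j, i ≠ j → Disjoint (π i) (π j)) ∧
    ∀ j : Fin m,
      (n = (π j).ncard + Module.finrank K ↥(sInf (π j) : Submodule K (Fin n → K))) ∧
      (¬ (SetLike.coe (sInf (π j) : Submodule K (Fin n → K)) ⊆
          ⋃ H ∈ {H | ∃ i : Fin m, i < j ∧ H ∈ π i}, SetLike.coe H)) ∧
      ∀ H ∈ π j,
        {H' | ∃ i : Fin m, i < j ∧ H' ∈ π i}.ncard =
          ((fun H' => H' ⊓ H) '' {H' | ∃ i : Fin m, i < j ∧ H' ∈ π i}).ncard + j.1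

/-! ## Subarrangements by size, supersolvability -/

/-- The ideal subarrangement `A_G^s` of hyperplanes `H_I` with `|I| ≤ s`. -/
noncomputable def AGs (K : Type*) [Field K] {n : ℕ} (G : SimpleGraph (Fin n)) (s : ℕ) :
    Set (Submodule K (Fin n → K)) :=
  hypI n K '' {I | I ∈ connSets G ∧ I.card ≤ s}

/-- The closure of a subspace in the intersection lattice of `A`. -/
noncomputable def flatClosure {K V : Type*} [Field K] [AddCommGroup V] [Module K V]
    (A : Set (Submodule K V)) (Z : Submodule K V) : Submodule K V :=
  sInf {H | H ∈ A ∧ Z ≤ H}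

/-- The rank (codimension) of a subspace of `K^n`. -/
noncomputable def arrRank (K : Type*) [Field K] {n : ℕ}
    (X : Submodule K (Fin n → K)) : ℕ :=
  n - Module.finrank K ↥X

/-- A modular flat of an arrangement. -/
noncomputable def IsModularFlat (K : Type*) [Field K] {n : ℕ}
    (A : Set (Submodule K (Fin n → K))) (X : Submodule K (Fin n → K)) : Prop :=
  X ∈ lat A ∧ ∀ Y ∈ lat A,
    arrRank K X + arrRank K Y =
      arrRank K (X ⊓ Y) + arrRank K (flatClosure A (X ⊔ Y))

/-- Supersolvability: a maximal chain of modular flats in `L(A)`. -/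
noncomputable def IsSupersolvable (K : Type*) [Field K] {n : ℕ}
    (A : Set (Submodule K (Fin n → K))) : Prop :=
  ∃ c : ℕ → Submodule K (Fin n → K),
    c 0 = ⊤ ∧ c (arrRank K (sInf A)) = sInf A ∧
    (∀ i ≤ arrRank K (sInf A), IsModularFlat K A (c i) ∧ arrRank K (c i) = i) ∧
    ∀ i < arrRank K (sInf A), c (i + 1) ≤ c i
section Generic
variable {K V : Type*} [Field K] [AddCommGroup V] [Module K V]

lemma my_isCoatom_ker {f : V →ₗ[K] K} (hf : f ≠ 0) : IsCoatom (LinearMap.ker f) := by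
  constructor
  · intro h
    exact hf (LinearMap.ker_eq_top.mp h)
  · intro W hW
    obtain ⟨w, hwW, hwf⟩ := SetLike.exists_of_lt hW
    have hfw : f w ≠ 0 := by simpa [LinearMap.mem_ker] using hwf
    rw [eq_top_iff]
    intro v _
    have h1 : v - (f v / f w) • w ∈ LinearMap.ker f := by
      simp [LinearMap.mem_ker, div_mul_cancel₀, hfw]
    have h2 : v - (f v / f w) • w ∈ W := hW.le h1
    simpa using W.add_mem h2 (W.smul_mem (f v / f w) hwW)

lemma exists_ker_eq {H : Submodule K V} (hH : IsCoatom H) :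
    ∃ f : V →ₗ[K] K, LinearMap.ker f = H := by
  have hne : H ≠ ⊤ := hH.1
  obtain ⟨x, hx⟩ : ∃ x, x ∉ H := by
    by_contra h
    push_neg at h
    exact hne (eq_top_iff'.mpr h)
  have hy : H.mkQ x ≠ 0 := by
    simpa [Submodule.Quotient.mk_eq_zero] using hx
  have hsup : H ⊔ span K {x} = ⊤ := by
    refine hH.2 _ (lt_of_le_of_ne le_sup_left ?_)
    intro h
    have hx' : x ∈ H ⊔ span K {x} := le_sup_right (a := H) (subset_span (Set.mem_singleton x) : x ∈ span K {x})
    rw [← h] at hx'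
    exact hx hx'
  have hspan : span K {H.mkQ x} = ⊤ := by
    have : Submodule.map H.mkQ (H ⊔ span K {x}) = ⊤ := by
      rw [hsup, Submodule.map_top, Submodule.range_mkQ]
    rw [Submodule.map_sup, Submodule.map_span] at this
    simpa [Submodule.map_mkQ_eq_top] using this
  have hinj : Function.Injective (LinearMap.toSpanSingleton K (V ⧸ H) (H.mkQ x)) := by
    rw [← LinearMap.ker_eq_bot]
    exact LinearMap.ker_toSpanSingleton K hy
  have hsurj : Function.Surjective (LinearMap.toSpanSingleton K (V ⧸ H) (H.mkQ x)) := by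
    rw [← LinearMap.range_eq_top, LinearMap.span_singleton_eq_range] at *
    exact hspan
  let e : K ≃ₗ[K] (V ⧸ H) := LinearEquiv.ofBijective _ ⟨hinj, hsurj⟩
  refine ⟨e.symm.toLinearMap ∘ₗ H.mkQ, ?_⟩
  rw [LinearMap.ker_comp, LinearEquiv.ker, Submodule.comap_bot, Submodule.ker_mkQ]

lemma iInf_ker_le_ker_of_mem_span {ι : Sort*} (L : ι → (V →ₗ[K] K)) {f : V →ₗ[K] K}
    (h : f ∈ span K (Set.range L)) : (⨅ i, LinearMap.ker (L i)) ≤ LinearMap.ker f := by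
  intro x hx
  have hx' : ∀ i, L i x = 0 := by
    intro i
    exact (Submodule.mem_iInf _).mp hx i
  rw [LinearMap.mem_ker]
  induction h using Submodule.span_induction with
  | mem g hg => obtain ⟨i, rfl⟩ := hg; exact hx' i
  | zero => simp
  | add g g' _ _ hg hg' => simp [hg, hg']
  | smul c g _ hg => simp [hg]

end Generic

section LatLemmas
variable {K V W : Type*} [Field K] [AddCommGroup V] [Module K V]
  [AddCommGroup W] [Module K W]

lemma top_mem_lat (A : Set (Submodule K V)) : ⊤ ∈ lat A :=
  ⟨∅, Set.empty_subset _, by simp⟩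

lemma mem_lat_of_mem {A : Set (Submodule K V)} {H : Submodule K V} (h : H ∈ A) :
    H ∈ lat A := ⟨{H}, by simpa using h, by simp⟩

lemma lat_iInf_mem {A : Set (Submodule K V)} {ι : Sort*} (f : ι → Submodule K V)
    (hf : ∀ i, f i ∈ lat A) : (⨅ i, f i) ∈ lat A := by
  choose Bs hBs hfs using hf
  refine ⟨⋃ i, Bs i, Set.iUnion_subset hBs, ?_⟩
  apply le_antisymm
  · refine le_sInf ?_
    rintro b ⟨s, ⟨i, rfl⟩, hb⟩
    exact le_trans (iInf_le _ i) ((hfs i).le.trans (sInf_le hb))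
  · refine le_iInf fun i => ?_
    rw [hfs i]
    exact sInf_le_sInf (Set.subset_iUnion Bs i)

variable {A : Set (Submodule K V)} {B : Set (Submodule K W)}

lemma orderIso_coe_iInf (Φ : ↥(lat A) ≃o ↥(lat B)) {ι : Sort*} (f : ι → ↥(lat A)) :
    ((Φ ⟨⨅ i, (f i : Submodule K V), lat_iInf_mem _ fun i => (f i).2⟩ : ↥(lat B)) :
      Submodule K W) = ⨅ i, (Φ (f i) : Submodule K W) := by
  apply le_antisymm
  · refine le_iInf fun i => ?_
    have h1 : (⟨⨅ j, (f j : Submodule K V), lat_iInf_mem _ fun j => (f j).2⟩ : ↥(lat A)) ≤ f i :=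
      iInf_le (fun j => (f j : Submodule K V)) i
    exact Φ.monotone h1
  · set R : Submodule K W := ⨅ i, (Φ (f i) : Submodule K W) with hR
    have hRmem : R ∈ lat B := lat_iInf_mem _ fun i => (Φ (f i)).2
    have h2 : ∀ i, Φ.symm ⟨R, hRmem⟩ ≤ f i := by
      intro i
      have h0 : (⟨R, hRmem⟩ : ↥(lat B)) ≤ Φ (f i) :=
        (iInf_le (fun j => (Φ (f j) : Submodule K W)) i : R ≤ (Φ (f i) : Submodule K W))
      simpa using Φ.symm.monotone h0
    have h3 : Φ.symm ⟨R, hRmem⟩ ≤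
        ⟨⨅ i, (f i : Submodule K V), lat_iInf_mem _ fun i => (f i).2⟩ :=
      (le_iInf fun i => (h2 i : (Φ.symm ⟨R, hRmem⟩ : Submodule K V) ≤ f i) :
        (Φ.symm ⟨R, hRmem⟩ : Submodule K V) ≤ ⨅ i, (f i : Submodule K V))
    have h4 := Φ.monotone h3
    simp at h4
    exact h4

lemma orderIso_iInf_le_iff (Φ : ↥(lat A) ≃o ↥(lat B)) {ι : Sort*} (f : ι → ↥(lat A))
    (g : ↥(lat A)) :
    (⨅ i, (f i : Submodule K V)) ≤ (g : Submodule K V) ↔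
      (⨅ i, (Φ (f i) : Submodule K W)) ≤ (Φ g : Submodule K W) := by
  rw [← orderIso_coe_iInf Φ f]
  constructor
  · intro h
    exact Φ.monotone (h : (⟨⨅ i, (f i : Submodule K V), _⟩ : ↥(lat A)) ≤ g)
  · intro h
    have := Φ.symm.monotone
      (h : Φ ⟨⨅ i, (f i : Submodule K V), lat_iInf_mem _ fun i => (f i).2⟩ ≤ Φ g)
    simp at this
    exact this

lemma orderIso_top (Φ : ↥(lat A) ≃o ↥(lat B)) :
    Φ ⟨⊤, top_mem_lat A⟩ = ⟨⊤, top_mem_lat B⟩ := by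
  apply le_antisymm
  · exact (le_top : (Φ ⟨⊤, top_mem_lat A⟩ : Submodule K W) ≤ ⊤)
  · have h : Φ.symm ⟨⊤, top_mem_lat B⟩ ≤ ⟨⊤, top_mem_lat A⟩ :=
      (le_top : (Φ.symm ⟨⊤, top_mem_lat B⟩ : Submodule K V) ≤ ⊤)
    simpa using Φ.monotone h

lemma orderIso_mem (Φ : ↥(lat A) ≃o ↥(lat B)) (hA : ∀ H ∈ A, IsCoatom H)
    (hB : ∀ H ∈ B, IsCoatom H) {H : Submodule K V} (hH : H ∈ A) :
    (Φ ⟨H, mem_lat_of_mem hH⟩ : Submodule K W) ∈ B := by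
  obtain ⟨C, hCB, hC⟩ := (Φ ⟨H, mem_lat_of_mem hH⟩).2
  have hne : (Φ ⟨H, mem_lat_of_mem hH⟩ : Submodule K W) ≠ ⊤ := by
    intro h
    have : Φ ⟨H, mem_lat_of_mem hH⟩ = ⟨⊤, top_mem_lat B⟩ := Subtype.ext h
    rw [← orderIso_top Φ] at this
    have := Φ.injective this
    exact (hA H hH).1 (congrArg Subtype.val this)
  have hCne : C.Nonempty := by
    rcases Set.eq_empty_or_nonempty C with h | h
    · exfalso; apply hne; rw [hC, h, sInf_empty]
    · exact h
  obtain ⟨H', hH'C⟩ := hCne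
  have hle : (Φ ⟨H, mem_lat_of_mem hH⟩ : Submodule K W) ≤ H' := hC.le.trans (sInf_le hH'C)
  have hH'B : H' ∈ B := hCB hH'C
  -- pull back H'
  set Y := Φ.symm ⟨H', mem_lat_of_mem hH'B⟩ with hY
  have hHY : H ≤ (Y : Submodule K V) := by
    have : (⟨H, mem_lat_of_mem hH⟩ : ↥(lat A)) ≤ Φ.symm ⟨H', mem_lat_of_mem hH'B⟩ := by
      have hle' : Φ ⟨H, mem_lat_of_mem hH⟩ ≤ ⟨H', mem_lat_of_mem hH'B⟩ := hle
      have := Φ.symm.monotone hle'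
      simpa using this
    exact this
  rcases eq_or_lt_of_le hHY with heq | hlt
  · have : Φ ⟨H, mem_lat_of_mem hH⟩ = ⟨H', mem_lat_of_mem hH'B⟩ := by
      rw [show (⟨H, mem_lat_of_mem hH⟩ : ↥(lat A)) = Y from Subtype.ext heq, hY]
      simp
    rw [this]
    exact hH'B
  · exfalso
    have hYtop : (Y : Submodule K V) = ⊤ := (hA H hH).2 _ hlt
    have : Y = ⟨⊤, top_mem_lat A⟩ := Subtype.ext hYtop
    rw [hY] at this
    have h2 : (⟨H', mem_lat_of_mem hH'B⟩ : ↥(lat B)) = Φ ⟨⊤, top_mem_lat A⟩ := by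
      rw [← this]; simp
    rw [orderIso_top Φ] at h2
    exact (hB H' hH'B).1 (congrArg Subtype.val h2)

end LatLemmas


section HypI
variable {n : ℕ} {K : Type*} [Field K]

lemma sumForm_apply (I : Finset (Fin n)) (x : Fin n → K) :
    sumForm n K I x = ∑ i ∈ I, x i := by
  simp [sumForm]

lemma sumForm_single (I : Finset (Fin n)) (j : Fin n) :
    sumForm n K I (Pi.single j 1) = if j ∈ I then 1 else 0 := by
  rw [sumForm_apply]
  simp only [Pi.single_apply]
  exact Finset.sum_ite_eq' I j (fun _ => (1 : K))

lemma mem_hypI {I : Finset (Fin n)} {x : Fin n → K} :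
    x ∈ hypI n K I ↔ ∑ i ∈ I, x i = 0 := by
  rw [hypI, LinearMap.mem_ker, sumForm_apply]

lemma hypI_coatom {I : Finset (Fin n)} (hI : I.Nonempty) : IsCoatom (hypI n K I) := by
  apply my_isCoatom_ker
  intro h
  obtain ⟨j, hj⟩ := hI
  have := congrArg (fun f => f (Pi.single j (1 : K))) h
  simp only [LinearMap.zero_apply] at this
  rw [sumForm_single, if_pos hj] at this
  exact one_ne_zero this

lemma iInf_single_le (I : Finset (Fin n)) :
    (⨅ i : {i // i ∈ I}, hypI n K {(i : Fin n)}) ≤ hypI n K I := by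
  intro x hx
  rw [mem_hypI]
  have hxi : ∀ i ∈ I, x i = 0 := by
    intro i hi
    have := (Submodule.mem_iInf _).mp hx ⟨i, hi⟩
    rw [mem_hypI] at this
    simpa using this
  exact Finset.sum_eq_zero hxi

lemma not_iInf_singleton_le {s J : Finset (Fin n)} {j : Fin n} (hj : j ∈ J) (hjs : j ∉ s) :
    ¬ ((⨅ i : {i // i ∈ s}, hypI n K {(i : Fin n)}) ≤ hypI n K J) := by
  intro h
  have hmem : Pi.single j (1 : K) ∈ ⨅ i : {i // i ∈ s}, hypI n K {(i : Fin n)} := by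
    rw [Submodule.mem_iInf]
    rintro ⟨i, hi⟩
    rw [mem_hypI]
    simp only [Finset.sum_singleton]
    have : i ≠ j := fun h => hjs (h ▸ hi)
    simp [Pi.single_apply, this.symm]
  have := h hmem
  rw [mem_hypI] at this
  simp only [Pi.single_apply] at this
  rw [Finset.sum_ite_eq' J j (fun _ => (1 : K)), if_pos hj] at this
  exact one_ne_zero this

lemma inf_le_insert {I : Finset (Fin n)} {v : Fin n} (hv : v ∉ I) :
    hypI n K I ⊓ hypI n K {v} ≤ hypI n K (insert v I) := by
  intro x hx
  obtain ⟨h1, h2⟩ := Submodule.mem_inf.mp hx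
  rw [mem_hypI] at h1 h2 ⊢
  rw [Finset.sum_insert hv, h1]
  simpa using h2

end HypI


section Graph
variable {n : ℕ} {G : SimpleGraph (Fin n)}

lemma singleton_connSets (i : Fin n) : ({i} : Finset (Fin n)) ∈ connSets G := by
  refine ⟨⟨i, Finset.mem_singleton_self i⟩, ?_⟩
  rw [SimpleGraph.connected_iff]
  refine ⟨?_, ⟨⟨i, by simp⟩⟩⟩
  intro a b
  have hab : a = b := by
    apply Subtype.ext
    have ha := a.2
    have hb := b.2
    simp only [Finset.coe_singleton, Set.mem_singleton_iff] at ha hb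
    rw [ha, hb]
  rw [hab]

lemma univ_connSets (hG : G.Connected) : (Finset.univ : Finset (Fin n)) ∈ connSets G := by
  have hne : Nonempty (Fin n) := hG.nonempty
  refine ⟨Finset.univ_nonempty, ?_⟩
  have hcoe : ((Finset.univ : Finset (Fin n)) : Set (Fin n)) = Set.univ := by simp
  rw [hcoe]
  exact (SimpleGraph.induceUnivIso G).connected_iff.mpr hG

lemma expand_connSets (hG : G.Connected) {I : Finset (Fin n)} (hI : I ∈ connSets G)
    (hne : I ≠ Finset.univ) : ∃ v, v ∉ I ∧ insert v I ∈ connSets G := by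
  obtain ⟨hInonempty, hIconn⟩ := hI
  obtain ⟨a, ha⟩ := hInonempty
  obtain ⟨b, hb⟩ : ∃ b, b ∉ I := by
    by_contra h
    push_neg at h
    exact hne (Finset.eq_univ_iff_forall.mpr h)
  obtain ⟨w⟩ := hG.preconnected a b
  obtain ⟨d, _, hd1, hd2⟩ := w.exists_boundary_dart (↑I : Set (Fin n)) (by simpa) (by simpa)
  have hdsnd : d.snd ∉ I := by simpa using hd2
  refine ⟨d.snd, hdsnd, ?_⟩
  set v := d.snd with hv
  set t : Set (Fin n) := (↑(insert v I) : Set (Fin n)) with ht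
  have hst : (↑I : Set (Fin n)) ⊆ t := by
    rw [ht, Finset.coe_insert]
    exact Set.subset_insert _ _
  have hvt : v ∈ t := by simp [ht]
  have hfstI : d.fst ∈ I := by simpa using hd1
  have hfst : d.fst ∈ t := hst (by simpa using hd1)
  refine ⟨⟨v, Finset.mem_insert_self _ _⟩, ?_⟩
  rw [SimpleGraph.connected_iff_exists_forall_reachable]
  refine ⟨⟨d.fst, hfst⟩, ?_⟩
  let hom : G.induce (↑I : Set (Fin n)) →g G.induce t :=
    SimpleGraph.induceHom SimpleGraph.Hom.id (fun x hx => hst hx)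
  intro w
  have hw0 : (w : Fin n) ∈ insert v I := by
    have h2 := w.2
    simpa using h2
  rcases Finset.mem_insert.mp hw0 with hw | hw
  · -- w = v : reachable via edge from d.fst
    have hadj : (G.induce t).Adj ⟨d.fst, hfst⟩ ⟨v, hvt⟩ := by
      simp only [SimpleGraph.comap_adj, Function.Embedding.coe_subtype]
      exact d.adj
    have : w = ⟨v, hvt⟩ := Subtype.ext hw
    rw [this]
    exact hadj.reachable
  · -- w.val ∈ I
    have hwI : (w : Fin n) ∈ (↑I : Set (Fin n)) := by simpa using hw
    have hr : (G.induce (↑I : Set (Fin n))).Reachable ⟨d.fst, hfstI⟩ ⟨(w : Fin n), hwI⟩ :=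
      hIconn.preconnected _ _
    have hr2 := hr.map hom
    have he1 : hom ⟨d.fst, hfstI⟩ = ⟨d.fst, hfst⟩ := Subtype.ext rfl
    have he2 : hom ⟨(w : Fin n), hwI⟩ = w := Subtype.ext rfl
    rwa [he1, he2] at hr2

end Graph


/-- For a connected simple graph `G` on `[n]`, the connected
subgraph arrangement `A_G` over `ℚ` is projectively unique: every central
arrangement in `ℚ^n` whose intersection lattice is isomorphic as a poset to that
of `A_G` is linearly isomorphic to `A_G`. -/
theorem connArr_projUnique (n : ℕ) (G : SimpleGraph (Fin n)) (hG : G.Connected) :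
    ProjUnique (connArr ℚ G) := by
  intro B hB hLE
  obtain ⟨ψ⟩ := hLE
  haveI : Nonempty (Fin n) := hG.nonempty
  have hAco : ∀ H ∈ connArr ℚ G, IsCoatom H := by
    rintro H ⟨I, hI, rfl⟩
    exact hypI_coatom hI.1
  have hBco : ∀ H ∈ B, IsCoatom H := hB.2
  set Φ : ↥(lat (connArr ℚ G)) ≃o ↥(lat B) := ψ.symm with hΦ
  have hmemA : ∀ I ∈ connSets G, hypI n ℚ I ∈ connArr ℚ G := fun I hI => ⟨I, hI, rfl⟩
  -- the image hyperplanes in B and their defining forms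
  choose g₀ hg₀ using fun H : {H : Submodule ℚ (Fin n → ℚ) // H ∈ B} =>
    exists_ker_eq (hBco H.1 H.2)
  have hKmem : ∀ I (hI : I ∈ connSets G),
      ((Φ ⟨hypI n ℚ I, mem_lat_of_mem (hmemA I hI)⟩ : ↥(lat B)) :
        Submodule ℚ (Fin n → ℚ)) ∈ B :=
    fun I hI => orderIso_mem Φ hAco hBco (hmemA I hI)
  let gI : ∀ I, I ∈ connSets G → ((Fin n → ℚ) →ₗ[ℚ] ℚ) := fun I hI =>
    g₀ ⟨_, hKmem I hI⟩
  have hgI : ∀ I (hI : I ∈ connSets G), LinearMap.ker (gI I hI) =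
      ((Φ ⟨hypI n ℚ I, mem_lat_of_mem (hmemA I hI)⟩ : ↥(lat B)) :
        Submodule ℚ (Fin n → ℚ)) :=
    fun I hI => hg₀ _
  -- the master transfer principle
  have transfer : ∀ {ι : Type} (c : ι → Finset (Fin n)) (hc : ∀ i, c i ∈ connSets G)
      (J : Finset (Fin n)) (hJ : J ∈ connSets G),
      ((⨅ i, hypI n ℚ (c i)) ≤ hypI n ℚ J) ↔
        ((⨅ i, LinearMap.ker (gI (c i) (hc i))) ≤ LinearMap.ker (gI J hJ)) := by
    intro ι c hc J hJ
    have h1 : ∀ i, LinearMap.ker (gI (c i) (hc i)) =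
        ((Φ ⟨hypI n ℚ (c i), mem_lat_of_mem (hmemA _ (hc i))⟩ : ↥(lat B)) :
          Submodule ℚ (Fin n → ℚ)) := fun i => hgI _ (hc i)
    simp only [h1, hgI J hJ]
    exact orderIso_iInf_le_iff Φ (fun i => ⟨hypI n ℚ (c i), mem_lat_of_mem (hmemA _ (hc i))⟩)
      ⟨hypI n ℚ J, mem_lat_of_mem (hmemA J hJ)⟩
  -- the singleton forms
  let gs : Fin n → ((Fin n → ℚ) →ₗ[ℚ] ℚ) := fun i => gI {i} (singleton_connSets i)
  -- linear independence of the singleton forms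
  have hli : LinearIndependent ℚ gs := by
    rw [Fintype.linearIndependent_iff]
    intro c hc
    by_contra hcne
    push_neg at hcne
    obtain ⟨j, hj⟩ := hcne
    have hspan : gs j ∈ Submodule.span ℚ
        (Set.range (fun i : {i // i ∈ Finset.univ.erase j} => gs (i : Fin n))) := by
      rw [mem_span_range_iff_exists_fun]
      refine ⟨fun i => -(c j)⁻¹ * c (i : Fin n), ?_⟩
      have hsum : ∑ i ∈ Finset.univ.erase j, c i • gs i + c j • gs j = 0 := by
        rw [Finset.sum_erase_add _ _ (Finset.mem_univ j)]
        exact hc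
      have h2 : ∑ i ∈ Finset.univ.erase j, c i • gs i = -(c j • gs j) :=
        eq_neg_of_add_eq_zero_left hsum
      calc ∑ i : {i // i ∈ Finset.univ.erase j}, (-(c j)⁻¹ * c (i : Fin n)) • gs (i : Fin n)
          = ∑ i ∈ Finset.univ.erase j, (-(c j)⁻¹ * c i) • gs i :=
            Finset.sum_coe_sort (Finset.univ.erase j) (fun i => (-(c j)⁻¹ * c i) • gs i)
        _ = (-(c j)⁻¹) • ∑ i ∈ Finset.univ.erase j, c i • gs i := by
            rw [Finset.smul_sum]
            exact Finset.sum_congr rfl fun i _ => by rw [mul_smul]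
        _ = gs j := by
            rw [h2, smul_neg, neg_smul, neg_neg, smul_smul, inv_mul_cancel₀ hj, one_smul]
    have hker := iInf_ker_le_ker_of_mem_span _ hspan
    have htr := (transfer (fun i : {i // i ∈ Finset.univ.erase j} => {(i : Fin n)})
      (fun i => singleton_connSets _) {j} (singleton_connSets j)).mpr hker
    exact not_iInf_singleton_le (Finset.mem_singleton_self j)
      (Finset.notMem_erase j Finset.univ) htr
  have hcard : Fintype.card (Fin n) =
      Module.finrank ℚ ((Fin n → ℚ) →ₗ[ℚ] ℚ) := by
    have hd : Module.finrank ℚ (Module.Dual ℚ (Fin n → ℚ)) =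
        Module.finrank ℚ (Fin n → ℚ) := Subspace.dual_finrank_eq
    simp only [Module.Dual] at hd
    rw [hd]
    simp
  let b : Module.Basis (Fin n) ℚ ((Fin n → ℚ) →ₗ[ℚ] ℚ) :=
    basisOfLinearIndependentOfCardEqFinrank hli hcard
  have hb : ∀ i, b i = gs i := fun i => by
    rw [coe_basisOfLinearIndependentOfCardEqFinrank]
  have hbgs : ⇑b = gs := funext hb
  -- membership in spans of singleton forms
  have hspan_mem : ∀ I (hI : I ∈ connSets G),
      gI I hI ∈ Submodule.span ℚ (⇑b '' (I : Set (Fin n))) := by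
    intro I hI
    have hA : (⨅ i : {i // i ∈ I}, hypI n ℚ {(i : Fin n)}) ≤ hypI n ℚ I := iInf_single_le I
    have hK := (transfer (fun i : {i // i ∈ I} => {(i : Fin n)})
      (fun i => singleton_connSets _) I hI).mp hA
    have hmem := mem_span_of_iInf_ker_le_ker hK
    have hrange : Set.range (fun i : {i // i ∈ I} => gI {(i : Fin n)} (singleton_connSets _))
        = ⇑b '' (I : Set (Fin n)) := by
      rw [hbgs, Set.image_eq_range]
      rfl
    rwa [hrange] at hmem
  have hsupp1 : ∀ I (hI : I ∈ connSets G), ∀ i, i ∉ I → b.repr (gI I hI) i = 0 := by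
    intro I hI i hi
    have hsub := (Module.Basis.mem_span_image b).mp (hspan_mem I hI)
    rw [← Finsupp.notMem_support_iff]
    intro hmem
    exact hi (by simpa using hsub hmem)
  have hsupp2 : ∀ I (hI : I ∈ connSets G), ∀ i ∈ I, b.repr (gI I hI) i ≠ 0 := by
    intro I hI i hiI h0
    have hsub := (Module.Basis.mem_span_image b).mp (hspan_mem I hI)
    have hsub2 : ↑(b.repr (gI I hI)).support ⊆ ((I.erase i : Finset (Fin n)) : Set (Fin n)) := by
      intro x hx
      have hxI := hsub hx
      simp only [Finset.coe_erase, Finset.mem_coe, Set.mem_diff, Set.mem_singleton_iff]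
      refine ⟨by simpa using hxI, ?_⟩
      intro hxi
      rw [hxi] at hx
      exact (Finsupp.mem_support_iff.mp hx) h0
    have hmem2 : gI I hI ∈ Submodule.span ℚ (⇑b '' ((I.erase i : Finset (Fin n)) : Set (Fin n))) :=
      (Module.Basis.mem_span_image b).mpr hsub2
    rw [hbgs, Set.image_eq_range] at hmem2
    have hker : (⨅ k : {k // k ∈ I.erase i}, LinearMap.ker
        (gI {(k : Fin n)} (singleton_connSets _))) ≤ LinearMap.ker (gI I hI) := by
      have := iInf_ker_le_ker_of_mem_span
        (fun k : ((I.erase i : Finset (Fin n)) : Set (Fin n)) => gs (k : Fin n)) hmem2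
      exact this
    have hA := (transfer (fun k : {k // k ∈ I.erase i} => {(k : Fin n)})
      (fun k => singleton_connSets _) I hI).mpr hker
    exact not_iInf_singleton_le hiI (Finset.notMem_erase i I) hA
  -- the reference form on the full vertex set
  have huniv : Finset.univ ∈ connSets G := univ_connSets hG
  have haV : ∀ i, b.repr (gI Finset.univ huniv) i ≠ 0 :=
    fun i => hsupp2 _ huniv i (Finset.mem_univ i)
  -- main downward induction on the complement size
  have main : ∀ (m : ℕ) (I : Finset (Fin n)) (hI : I ∈ connSets G), n - I.card ≤ m →
      ∃ lam : ℚ, lam ≠ 0 ∧ ∀ i : Fin n,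
        b.repr (gI I hI) i = if i ∈ I then lam * b.repr (gI Finset.univ huniv) i else 0 := by
    intro m
    induction m with
    | zero =>
      intro I hI hc
      have hIu : I = Finset.univ := by
        apply Finset.eq_univ_of_card
        have h1 : I.card ≤ Fintype.card (Fin n) := I.card_le_univ
        simp only [Fintype.card_fin] at h1 ⊢
        omega
      subst hIu
      exact ⟨1, one_ne_zero, fun i => by simp⟩
    | succ m ih =>
      intro I hI hc
      by_cases hIu : I = Finset.univ
      · subst hIu
        exact ⟨1, one_ne_zero, fun i => by simp⟩
      · obtain ⟨v, hv, hJ⟩ := expand_connSets hG hI hIu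
        have hIcard : I.card < n := by
          have h1 : I.card ≤ Fintype.card (Fin n) := I.card_le_univ
          rcases lt_or_eq_of_le h1 with h | h
          · simpa using h
          · exact absurd (Finset.eq_univ_of_card I (by simpa using h)) hIu
        have hJcard : n - (insert v I).card ≤ m := by
          rw [Finset.card_insert_of_notMem hv]
          omega
        obtain ⟨lamJ, hlamJ, hrJ⟩ := ih (insert v I) hJ hJcard
        -- the three-term relation
        have hpair : (⨅ x : Bool, hypI n ℚ (bif x then I else {v})) ≤
            hypI n ℚ (insert v I) := by
          rw [iInf_bool_eq]
          exact inf_le_insert hv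
        have hcB : ∀ x : Bool, (bif x then I else ({v} : Finset (Fin n))) ∈ connSets G := by
          intro x
          cases x
          · exact singleton_connSets v
          · exact hI
        have hK := (transfer _ hcB (insert v I) hJ).mp hpair
        have hmem := mem_span_of_iInf_ker_le_ker hK
        rw [mem_span_range_iff_exists_fun] at hmem
        obtain ⟨co, hco⟩ := hmem
        rw [Fintype.sum_bool] at hco
        have hco' : co true • gI I hI + co false • gs v = gI (insert v I) hJ := hco
        have hrepr : ∀ i, b.repr (gI (insert v I) hJ) i
            = co true * b.repr (gI I hI) i + co false * (if v = i then 1 else 0) := by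
          intro i
          rw [← hco']
          rw [map_add, map_smul, map_smul]
          simp only [Finsupp.coe_add, Finsupp.coe_smul, Pi.add_apply, Pi.smul_apply,
            smul_eq_mul]
          congr 1
          have : gs v = b v := (hb v).symm
          rw [this, Module.Basis.repr_self, Finsupp.single_apply]
        obtain ⟨i0, hi0⟩ := hI.1
        have hi0v : v ≠ i0 := fun h => hv (h ▸ hi0)
        have heq0 : lamJ * b.repr (gI Finset.univ huniv) i0
            = co true * b.repr (gI I hI) i0 := by
          have h1 := hrepr i0
          rw [hrJ i0, if_pos (Finset.mem_insert_of_mem hi0), if_neg hi0v] at h1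
          simpa using h1
        have hs : co true ≠ 0 := by
          intro h0
          rw [h0, zero_mul] at heq0
          exact mul_ne_zero hlamJ (haV i0) heq0
        refine ⟨(co true)⁻¹ * lamJ, mul_ne_zero (inv_ne_zero hs) hlamJ, ?_⟩
        intro i
        by_cases hiI : i ∈ I
        · have hiv : v ≠ i := fun h => hv (h ▸ hiI)
          have h1 := hrepr i
          rw [hrJ i, if_pos (Finset.mem_insert_of_mem hiI), if_neg hiv] at h1
          rw [if_pos hiI]
          field_simp at h1 ⊢
          linarith [h1]
        · rw [if_neg hiI]
          exact hsupp1 I hI i hiI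
  -- the predual basis of the singleton forms
  let w : Module.Basis (Fin n) ℚ (Fin n → ℚ) :=
    b.dualBasis.map (Module.evalEquiv ℚ (Fin n → ℚ)).symm
  have hw : ∀ (f : (Fin n → ℚ) →ₗ[ℚ] ℚ) (j : Fin n), f (w j) = b.repr f j := by
    intro f j
    have h1 : w j = (Module.evalEquiv ℚ (Fin n → ℚ)).symm (b.dualBasis j) := by
      simp [w, Module.Basis.map_apply]
    rw [h1, Module.apply_evalEquiv_symm_apply, Module.Basis.dualBasis_apply]
  -- the linear isomorphism
  let D : (Fin n → ℚ) ≃ₗ[ℚ] (Fin n → ℚ) :=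
    LinearEquiv.piCongrRight (fun i => LinearEquiv.smulOfNeZero ℚ ℚ _ (haV i))
  let φ : (Fin n → ℚ) ≃ₗ[ℚ] (Fin n → ℚ) :=
    (w.equiv (Pi.basisFun ℚ (Fin n)) (Equiv.refl _)).trans D
  have hφw : ∀ j i, φ (w j) i =
      (if i = j then b.repr (gI Finset.univ huniv) j else 0) := by
    intro j i
    have h1 : φ (w j) = D (Pi.basisFun ℚ (Fin n) j) := by
      simp only [φ, LinearEquiv.trans_apply]
      rw [Module.Basis.equiv_apply]
      simp
    rw [h1]
    have h2 : D (Pi.basisFun ℚ (Fin n) j) i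
        = b.repr (gI Finset.univ huniv) i * Pi.basisFun ℚ (Fin n) j i := by
      simp [D, LinearEquiv.piCongrRight, LinearEquiv.smulOfNeZero, LinearEquiv.smulOfUnit,
        DistribMulAction.toLinearEquiv, Units.smul_def, smul_eq_mul]
    rw [h2]
    rw [Pi.basisFun_apply]
    by_cases hij : i = j
    · subst hij
      simp [Pi.single_apply]
    · simp [Pi.single_apply, hij]
  -- the key identity relating the forms
  have hkey : ∀ I (hI : I ∈ connSets G), ∃ lam : ℚ, lam ≠ 0 ∧
      gI I hI = lam • ((sumForm n ℚ I).comp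
        (φ : (Fin n → ℚ) →ₗ[ℚ] (Fin n → ℚ))) := by
    intro I hI
    obtain ⟨lam, hlam, hr⟩ := main n I hI (by omega)
    refine ⟨lam, hlam, ?_⟩
    apply w.ext
    intro j
    rw [hw (gI I hI) j, hr j]
    simp only [LinearMap.smul_apply, LinearMap.comp_apply, smul_eq_mul, LinearEquiv.coe_coe]
    rw [sumForm_apply]
    have hsum : ∑ k ∈ I, (φ (w j)) k
        = if j ∈ I then b.repr (gI Finset.univ huniv) j else 0 := by
      have : ∀ k ∈ I, (φ (w j)) k
          = if k = j then b.repr (gI Finset.univ huniv) j else 0 :=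
        fun k _ => hφw j k
      rw [Finset.sum_congr rfl this]
      exact Finset.sum_ite_eq' I j _
    rw [hsum]
    by_cases hjI : j ∈ I
    · simp [hjI]
    · simp [hjI]
  -- images of the hyperplanes of B
  have hmap : ∀ I (hI : I ∈ connSets G),
      Submodule.map (φ : (Fin n → ℚ) →ₗ[ℚ] (Fin n → ℚ)) (LinearMap.ker (gI I hI))
        = hypI n ℚ I := by
    intro I hI
    obtain ⟨lam, hlam, hkeyI⟩ := hkey I hI
    have h1 : Submodule.map (φ : (Fin n → ℚ) →ₗ[ℚ] (Fin n → ℚ)) (LinearMap.ker (gI I hI))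
        = LinearMap.ker ((gI I hI).comp (φ.symm : (Fin n → ℚ) →ₗ[ℚ] (Fin n → ℚ))) := by
      ext x
      simp only [Submodule.mem_map, LinearMap.mem_ker, LinearMap.comp_apply,
        LinearEquiv.coe_coe]
      constructor
      · rintro ⟨y, hy, rfl⟩
        rwa [φ.symm_apply_apply]
      · intro hx
        exact ⟨φ.symm x, hx, φ.apply_symm_apply x⟩
    rw [h1, hkeyI]
    have h2 : ((lam • ((sumForm n ℚ I).comp (φ : (Fin n → ℚ) →ₗ[ℚ] (Fin n → ℚ)))).comp
        (φ.symm : (Fin n → ℚ) →ₗ[ℚ] (Fin n → ℚ))) = lam • sumForm n ℚ I := by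
      ext x
      simp [LinearMap.comp_apply]
    rw [h2, LinearMap.ker_smul _ _ hlam]
    rfl
  -- conclusion
  refine ⟨φ, ?_⟩
  apply Set.Subset.antisymm
  · rintro H' ⟨I, hI, rfl⟩
    refine ⟨LinearMap.ker (gI I hI), ?_, hmap I hI⟩
    rw [hgI I hI]
    exact hKmem I hI
  · rintro H' ⟨Hb, hHb, rfl⟩
    have h1 : ((ψ ⟨Hb, mem_lat_of_mem hHb⟩ : ↥(lat (connArr ℚ G))) :
        Submodule ℚ (Fin n → ℚ)) ∈ connArr ℚ G :=
      orderIso_mem ψ hBco hAco hHb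
    obtain ⟨I, hI, hEq⟩ := h1
    have h2 : Hb = LinearMap.ker (gI I hI) := by
      rw [hgI I hI]
      have h3 : (⟨hypI n ℚ I, mem_lat_of_mem (hmemA I hI)⟩ : ↥(lat (connArr ℚ G))) =
          ψ ⟨Hb, mem_lat_of_mem hHb⟩ := Subtype.ext hEq
      rw [hΦ, h3]
      simp
    rw [h2, hmap I hI]
    exact ⟨I, hI, rfl⟩
end

section
/- Let A and B be central arrangements in a vector space V, let S ⊆ A with ⟨S⟩_A = A and T ⊆ B with ⟨T⟩_B = B. Suppose ψ : L(A) → L(B) is a poset isomorphism and φ ∈ GL(V) are such that ψ(S) = φ(S) = T and ψ(H) = φ(H) for every H ∈ S. Then φ maps A onto B, i.e. {φ(H) : H ∈ A} = B. -/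
open Submodule

section MyAuxGen

variable {K : Type} [Field K] {V : Type} [AddCommGroup V] [Module K V]

lemma my_mem_lat {A : Set (Submodule K V)} {H : Submodule K V} (hH : H ∈ A) :
    H ∈ lat A :=
  ⟨{H}, Set.singleton_subset_iff.mpr hH, (sInf_singleton).symm⟩

lemma my_top_mem_lat (A : Set (Submodule K V)) : (⊤ : Submodule K V) ∈ lat A :=
  ⟨∅, Set.empty_subset _, by simp⟩

lemma my_sInf_mem_lat {A : Set (Submodule K V)} {J : Set (Submodule K V)}
    (hJ : ∀ X ∈ J, X ∈ lat A) : sInf J ∈ lat A := by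
  refine ⟨{H | H ∈ A ∧ sInf J ≤ H}, fun H hH => hH.1, le_antisymm
    (le_sInf fun H hH => hH.2) (le_sInf fun X hX => ?_)⟩
  obtain ⟨C, hCA, rfl⟩ := hJ X hX
  exact le_sInf fun H hH => sInf_le ⟨hCA hH, sInf_le_of_le hX (sInf_le hH)⟩

lemma my_psi_top {A B : Set (Submodule K V)} (ψ : ↥(lat A) ≃o ↥(lat B))
    {X : ↥(lat A)} (h : (ψ X : Submodule K V) = ⊤) : (X : Submodule K V) = ⊤ := by
  have htB : (⊤ : Submodule K V) ∈ lat B := my_top_mem_lat B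
  have htA : (⊤ : Submodule K V) ∈ lat A := my_top_mem_lat A
  have h1 : ψ ⟨⊤, htA⟩ = ⟨⊤, htB⟩ := by
    refine le_antisymm (Subtype.coe_le_coe.mp ?_) ?_
    · exact le_top
    · calc (⟨⊤, htB⟩ : ↥(lat B)) = ψ (ψ.symm ⟨⊤, htB⟩) := (ψ.apply_symm_apply _).symm
        _ ≤ ψ ⟨⊤, htA⟩ := ψ.monotone (Subtype.coe_le_coe.mp le_top)
  have h2 : ψ X = ⟨⊤, htB⟩ := Subtype.ext h
  rw [← h1] at h2
  exact congrArg Subtype.val (ψ.injective h2)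

lemma my_map_sInf (φ : V ≃ₗ[K] V) (J : Set (Submodule K V)) :
    Submodule.map (φ : V →ₗ[K] V) (sInf J)
      = sInf ((fun Y => Submodule.map (φ : V →ₗ[K] V) Y) '' J) := by
  rw [sInf_image]
  exact (Submodule.orderIsoMapComap φ).map_sInf J

lemma my_map_sSup (φ : V ≃ₗ[K] V) (J : Set (Submodule K V)) :
    Submodule.map (φ : V →ₗ[K] V) (sSup J)
      = sSup ((fun Y => Submodule.map (φ : V →ₗ[K] V) Y) '' J) := by
  rw [sSup_image]
  exact (Submodule.orderIsoMapComap φ).map_sSup J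

lemma my_lat_agree {A B : Set (Submodule K V)} (ψ : ↥(lat A) ≃o ↥(lat B))
    (φ : V ≃ₗ[K] V) (G : Set (Submodule K V)) (hGA : ∀ H ∈ G, H ∈ lat A)
    (hG : ∀ H ∈ G, ∀ hH : H ∈ lat A,
      (ψ ⟨H, hH⟩ : Submodule K V) = Submodule.map (φ : V →ₗ[K] V) H) :
    ∀ X ∈ lat G, ∃ hX : X ∈ lat A,
      (ψ ⟨X, hX⟩ : Submodule K V) = Submodule.map (φ : V →ₗ[K] V) X := by
  rintro X ⟨J, hJG, rfl⟩
  have hJA : ∀ Y ∈ J, Y ∈ lat A := fun Y hY => hGA Y (hJG hY)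
  have hX : sInf J ∈ lat A := my_sInf_mem_lat hJA
  refine ⟨hX, ?_⟩
  have memB : Submodule.map (φ : V →ₗ[K] V) (sInf J) ∈ lat B := by
    rw [my_map_sInf]
    refine my_sInf_mem_lat ?_
    rintro Z ⟨Y, hY, rfl⟩
    show Submodule.map (φ : V →ₗ[K] V) Y ∈ lat B
    rw [← hG Y (hJG hY) (hJA Y hY)]
    exact (ψ ⟨Y, hJA Y hY⟩).2
  refine le_antisymm ?_ ?_
  · rw [my_map_sInf]
    refine le_sInf ?_
    rintro Z ⟨Y, hY, rfl⟩
    show (ψ ⟨sInf J, hX⟩ : Submodule K V) ≤ Submodule.map (φ : V →ₗ[K] V) Y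
    rw [← hG Y (hJG hY) (hJA Y hY)]
    exact Subtype.coe_le_coe.mpr (ψ.monotone (Subtype.coe_le_coe.mp (sInf_le hY)))
  · have hW : ∀ Y ∈ J, ((ψ.symm ⟨_, memB⟩ : ↥(lat A)) : Submodule K V) ≤ Y := by
      intro Y hY
      have h1 : (⟨Submodule.map (φ : V →ₗ[K] V) (sInf J), memB⟩ : ↥(lat B))
          ≤ ψ ⟨Y, hJA Y hY⟩ := by
        refine Subtype.coe_le_coe.mp ?_
        rw [hG Y (hJG hY) (hJA Y hY)]
        exact Submodule.map_mono (sInf_le hY)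
      have := ψ.symm.monotone h1
      rw [ψ.symm_apply_apply] at this
      exact Subtype.coe_le_coe.mpr this
    have h2 : (ψ.symm ⟨_, memB⟩ : ↥(lat A)) ≤ ⟨sInf J, hX⟩ :=
      Subtype.coe_le_coe.mp (le_sInf hW)
    have h3 := ψ.monotone h2
    rw [ψ.apply_symm_apply] at h3
    exact Subtype.coe_le_coe.mpr h3

lemma my_coatom_map (φ : V ≃ₗ[K] V) {H : Submodule K V} (h : IsCoatom H) :
    IsCoatom (Submodule.map (φ : V →ₗ[K] V) H) :=
  ((Submodule.orderIsoMapComap φ).isCoatom_iff H).mpr h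

lemma my_gen_agree {A B S : Set (Submodule K V)} (hA2 : ∀ H ∈ A, IsCoatom H)
    (hgenA : genSpan A S = A)
    (ψ : ↥(lat A) ≃o ↥(lat B)) (φ : V ≃ₗ[K] V)
    (hψφ : ∀ H : Submodule K V, H ∈ S → ∀ hH : H ∈ lat A,
      ((ψ ⟨H, hH⟩ : Submodule K V)) = Submodule.map (φ : V →ₗ[K] V) H) :
    ∀ (i : ℕ), ∀ H ∈ Gen A S i, ∀ hH : H ∈ lat A,
      (ψ ⟨H, hH⟩ : Submodule K V) = Submodule.map (φ : V →ₗ[K] V) H := by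
  intro i
  induction i with
  | zero => exact hψφ
  | succ i ih =>
    rintro H ⟨hHA, J, hJlat, rfl⟩ hH
    have hGenA : Gen A S i ⊆ A := by
      have h0 := Set.subset_iUnion (Gen A S) i
      rwa [show (⋃ i, Gen A S i) = A from hgenA] at h0
    have hlatJ := my_lat_agree ψ φ (Gen A S i)
      (fun Y hY => my_mem_lat (hGenA hY)) ih
    have le1 : Submodule.map (φ : V →ₗ[K] V) (sSup J) ≤ ψ ⟨sSup J, hH⟩ := by
      rw [my_map_sSup]
      refine sSup_le ?_
      rintro Z ⟨Y, hY, rfl⟩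
      obtain ⟨hYl, hYeq⟩ := hlatJ Y (hJlat hY)
      show Submodule.map (φ : V →ₗ[K] V) Y ≤ (ψ ⟨sSup J, hH⟩ : Submodule K V)
      rw [← hYeq]
      exact Subtype.coe_le_coe.mpr (ψ.monotone (Subtype.coe_le_coe.mp (le_sSup hY)))
    have hco : IsCoatom (Submodule.map (φ : V →ₗ[K] V) (sSup J)) :=
      my_coatom_map φ (hA2 _ hHA)
    have hne : (ψ ⟨sSup J, hH⟩ : Submodule K V) ≠ ⊤ :=
      fun h => (hA2 _ hHA).1 (my_psi_top ψ h)
    rcases le1.lt_or_eq with hlt | heq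
    · exact absurd (hco.2 _ hlt) hne
    · exact heq.symm

lemma my_mem_of_coatom_lat {B : Set (Submodule K V)} (hB2 : ∀ H ∈ B, IsCoatom H)
    {X : Submodule K V} (hX : X ∈ lat B) (hco : IsCoatom X) : X ∈ B := by
  obtain ⟨C, hCB, rfl⟩ := hX
  rcases C.eq_empty_or_nonempty with rfl | ⟨H, hH⟩
  · simp at hco
    exact absurd hco.1 (by simp)
  · have h1 : sInf C ≤ H := sInf_le hH
    rcases h1.lt_or_eq with hlt | heq
    · exact absurd (hco.2 _ hlt) (hB2 _ (hCB hH)).1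
    · rw [heq]; exact hCB hH

/-- Core lemma: `φ` agrees with `ψ` on all of `A` and carries `A` into `B`. -/
lemma my_main {A B S : Set (Submodule K V)} (hA2 : ∀ H ∈ A, IsCoatom H)
    (hB2 : ∀ H ∈ B, IsCoatom H) (hgenA : genSpan A S = A)
    (ψ : ↥(lat A) ≃o ↥(lat B)) (φ : V ≃ₗ[K] V)
    (hψφ : ∀ H : Submodule K V, H ∈ S → ∀ hH : H ∈ lat A,
      ((ψ ⟨H, hH⟩ : Submodule K V)) = Submodule.map (φ : V →ₗ[K] V) H) :
    ∀ H ∈ A, ∀ hH : H ∈ lat A,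
      (ψ ⟨H, hH⟩ : Submodule K V) = Submodule.map (φ : V →ₗ[K] V) H ∧
      Submodule.map (φ : V →ₗ[K] V) H ∈ B := by
  intro H hHA hH
  obtain ⟨i, hi⟩ : ∃ i, H ∈ Gen A S i := by
    have h0 : H ∈ genSpan A S := by rw [show genSpan A S = A from hgenA]; exact hHA
    exact Set.mem_iUnion.mp h0
  have heq := my_gen_agree hA2 hgenA ψ φ hψφ i H hi hH
  refine ⟨heq, ?_⟩
  rw [← heq]
  exact my_mem_of_coatom_lat hB2 (ψ ⟨H, hH⟩).2 (heq ▸ my_coatom_map φ (hA2 _ hHA))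

end MyAuxGen

/-- If `S` generates `A`, `T` generates `B`, and a poset
isomorphism `ψ : L(A) → L(B)` agrees on `S` with some `φ ∈ GL(V)` carrying `S`
onto `T`, then `φ` maps `A` onto `B`. -/
theorem map_eq_of_gen (K : Type) [Field K] (V : Type) [AddCommGroup V] [Module K V]
    (A B S T : Set (Submodule K V)) (hA : IsCentralArr A) (hB : IsCentralArr B)
    (hS : S.Nonempty) (hT : T.Nonempty)
    (hgenA : genSpan A S = A) (hgenB : genSpan B T = B)
    (ψ : ↥(lat A) ≃o ↥(lat B)) (φ : V ≃ₗ[K] V)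
    (hψφ : ∀ H : Submodule K V, H ∈ S → ∀ hH : H ∈ lat A,
      ((ψ ⟨H, hH⟩ : Submodule K V)) = Submodule.map (φ : V →ₗ[K] V) H)
    (hφS : (fun H => Submodule.map (φ : V →ₗ[K] V) H) '' S = T) :
    (fun H => Submodule.map (φ : V →ₗ[K] V) H) '' A = B := by
  have hSA : S ⊆ A := by
    have h0 := Set.subset_iUnion (Gen A S) 0
    rwa [show (⋃ i, Gen A S i) = A from hgenA] at h0
  have hTB : T ⊆ B := by
    have h0 := Set.subset_iUnion (Gen B T) 0
    rwa [show (⋃ i, Gen B T i) = B from hgenB] at h0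
  have hmapsymm : ∀ H : Submodule K V,
      Submodule.map (φ.symm : V →ₗ[K] V) (Submodule.map (φ : V →ₗ[K] V) H) = H := by
    intro H
    ext x
    simp [Submodule.mem_map]
  have hmap2 : ∀ H : Submodule K V,
      Submodule.map (φ : V →ₗ[K] V) (Submodule.map (φ.symm : V →ₗ[K] V) H) = H := by
    intro H
    ext x
    simp [Submodule.mem_map]
  have hψφ' : ∀ Y : Submodule K V, Y ∈ T → ∀ hY : Y ∈ lat B,
      ((ψ.symm ⟨Y, hY⟩ : Submodule K V)) = Submodule.map (φ.symm : V →ₗ[K] V) Y := by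
    intro Y hYT hY
    obtain ⟨H, hHS, rfl⟩ : ∃ H ∈ S, Submodule.map (φ : V →ₗ[K] V) H = Y := by
      rw [← hφS] at hYT
      obtain ⟨H, hHS, hHeq⟩ := hYT
      exact ⟨H, hHS, hHeq⟩
    have hHlat : H ∈ lat A := my_mem_lat (hSA hHS)
    have h1 : ψ ⟨H, hHlat⟩ = ⟨Submodule.map (φ : V →ₗ[K] V) H, hY⟩ :=
      Subtype.ext (hψφ H hHS hHlat)
    have h2 : ψ.symm ⟨Submodule.map (φ : V →ₗ[K] V) H, hY⟩ = ⟨H, hHlat⟩ := by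
      rw [← h1, ψ.symm_apply_apply]
    rw [h2, hmapsymm]
  apply Set.Subset.antisymm
  · rintro _ ⟨H, hHA, rfl⟩
    exact (my_main hA.2 hB.2 hgenA ψ φ hψφ H hHA (my_mem_lat hHA)).2
  · intro Y hYB
    have := (my_main hB.2 hA.2 hgenB ψ.symm φ.symm hψφ' Y hYB (my_mem_lat hYB)).2
    exact ⟨Submodule.map (φ.symm : V →ₗ[K] V) Y, this, hmap2 Y⟩
end
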